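/- Commutativity (abelian property) of the activated random walk graphical construction: fix m, an envelope configuration F, and an initial state X with all counters zero. Suppose that for some label sequence N ∈ {1,…,m}^ℕ the sequence N·X stabilizes at a state X̃. Then for every label sequence N' ∈ 𝒩_m, the sequence N'·X also stabilizes, at a state having the same counters j_z as X̃ at every site z ∈ ℤ (hence the same total number of opened envelopes and the same number R_z of opened jump instructions at every site) and the same multiset of (position, type) pairs as X̃. -/

import Mathlib

/-- A state of the activated random walk graphical construction with `m` particles on `ℤ`:
positions, types (`true` = B = active, `false` = A = passive) and envelope counters. -/
structure ARWState (m : ℕ) where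
  pos : Fin m → ℤ
  typ : Fin m → Bool
  cnt : ℤ → ℕ

/-- An envelope configuration takes values in `{-1, 0, 1}`:
`±1` is a jump instruction, `0` a sleep instruction. -/
def ValidEnvelopes (F : ℤ → ℕ → ℤ) : Prop :=
  ∀ z j, F z j = -1 ∨ F z j = 0 ∨ F z j = 1

/-- The action `n · X` of a label `n` on a state `X`. -/
def arwStep {m : ℕ} (F : ℤ → ℕ → ℤ) (n : Fin m) (X : ARWState m) : ARWState m :=
  if X.typ n = false then X
  else
    let z := X.pos n
    let instr := F z (X.cnt z)
    let cnt' : ℤ → ℕ := fun w => if w = z then X.cnt w + 1 else X.cnt w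
    if instr = 0 then
      { pos := X.pos
        typ := fun k =>
          if k = n then (if ∃ l, l ≠ n ∧ X.pos l = z then true else false) else X.typ k
        cnt := cnt' }
    else
      let pos' : Fin m → ℤ := fun k => if k = n then z + instr else X.pos k
      { pos := pos'
        typ := fun k => if pos' k = z + instr then true else X.typ k
        cnt := cnt' }

/-- The evolution `N · X`: `X₀ = X`, `X_{k+1} = n_{k+1} · X_k`. -/
def arwEvolve {m : ℕ} (F : ℤ → ℕ → ℤ) (N : ℕ → Fin m) (X : ARWState m) : ℕ → ARWState m
  | 0 => X
  | k + 1 => arwStep F (N k) (arwEvolve F N X k)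

/-- `N · X` stabilizes at `X'`: eventually the sequence is constantly `X'`,
and every particle of `X'` is passive. -/
def StabilizesAt {m : ℕ} (F : ℤ → ℕ → ℤ) (N : ℕ → Fin m) (X X' : ARWState m) : Prop :=
  (∃ k₀, ∀ k, k₀ ≤ k → arwEvolve F N X k = X') ∧ ∀ n, X'.typ n = false

/-- `𝒩_m`: label sequences in which every label occurs infinitely often. -/
def FairSeq {m : ℕ} (N : ℕ → Fin m) : Prop :=
  ∀ n : Fin m, ∀ k : ℕ, ∃ k', k ≤ k' ∧ N k' = n

/-- Number of jump instructions among the first `c` envelopes at site `z`. -/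
def jumpCount (F : ℤ → ℕ → ℤ) (z : ℤ) (c : ℕ) : ℕ :=
  ((Finset.range c).filter (fun j => F z j ≠ 0)).card



namespace ARWProof

@[ext] structure QS where
  cnt : ℤ → ℕ
  act : ℤ → ℕ
  pas : ℤ → ℕ

/-- quotient toppling at site `z` -/
def topple (F : ℤ → ℕ → ℤ) (z : ℤ) (Q : QS) : QS :=
  ⟨fun x => if x = z then Q.cnt x + 1 else Q.cnt x,
   fun x =>
     if F z (Q.cnt z) = 0 then
       if x = z then (if Q.act z + Q.pas z = 1 then 0 else Q.act x) else Q.act x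
     else
       if x = z + F z (Q.cnt z) then Q.act x + Q.pas x + 1
       else if x = z then Q.act x - 1 else Q.act x,
   fun x =>
     if F z (Q.cnt z) = 0 then
       if x = z then (if Q.act z + Q.pas z = 1 then 1 else Q.pas x) else Q.pas x
     else if x = z + F z (Q.cnt z) then 0 else Q.pas x⟩

@[simp] lemma topple_cnt (F : ℤ → ℕ → ℤ) (z : ℤ) (Q : QS) (x : ℤ) :
    (topple F z Q).cnt x = if x = z then Q.cnt x + 1 else Q.cnt x := rfl

lemma topple_act (F : ℤ → ℕ → ℤ) (z : ℤ) (Q : QS) (x : ℤ) :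
    (topple F z Q).act x =
      if F z (Q.cnt z) = 0 then
        if x = z then (if Q.act z + Q.pas z = 1 then 0 else Q.act x) else Q.act x
      else
        if x = z + F z (Q.cnt z) then Q.act x + Q.pas x + 1
        else if x = z then Q.act x - 1 else Q.act x := rfl

lemma topple_pas (F : ℤ → ℕ → ℤ) (z : ℤ) (Q : QS) (x : ℤ) :
    (topple F z Q).pas x =
      if F z (Q.cnt z) = 0 then
        if x = z then (if Q.act z + Q.pas z = 1 then 1 else Q.pas x) else Q.pas x
      else if x = z + F z (Q.cnt z) then 0 else Q.pas x := rfl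

lemma topple_act_other (F : ℤ → ℕ → ℤ) {z w : ℤ} (hzw : w ≠ z) (Q : QS) (h : 1 ≤ Q.act w) :
    1 ≤ (topple F z Q).act w := by
  rw [topple_act]
  split_ifs <;> omega

set_option maxHeartbeats 1000000 in
lemma topple_comm (F : ℤ → ℕ → ℤ) {z w : ℤ} (hzw : z ≠ w) {Q : QS}
    (hz : 1 ≤ Q.act z) (hw : 1 ≤ Q.act w) :
    topple F z (topple F w Q) = topple F w (topple F z Q) := by
  by_cases ha : F z (Q.cnt z) = 0 <;> by_cases hb : F w (Q.cnt w) = 0 <;>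
  · ext x
    · simp only [topple_cnt]; split_ifs <;> omega
    · simp only [topple_act, topple_pas, topple_cnt, hzw, Ne.symm hzw, if_neg, ite_false,
        ite_true, ha, hb]
      split_ifs <;> (try subst_vars) <;> omega
    · simp only [topple_act, topple_pas, topple_cnt, hzw, Ne.symm hzw, if_neg, ite_false,
        ite_true, ha, hb]
      split_ifs <;> (try subst_vars) <;> omega

/-- run a list of topplings -/
def runL (F : ℤ → ℕ → ℤ) : List ℤ → QS → QS
  | [], Q => Q
  | z :: l, Q => runL F l (topple F z Q)

/-- legality of a toppling list -/
def LegalL (F : ℤ → ℕ → ℤ) : List ℤ → QS → Prop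
  | [], _ => True
  | z :: l, Q => 1 ≤ Q.act z ∧ LegalL F l (topple F z Q)

def StableQ (Q : QS) : Prop := ∀ z, Q.act z = 0

lemma runL_append (F : ℤ → ℕ → ℤ) (a b : List ℤ) (Q : QS) :
    runL F (a ++ b) Q = runL F b (runL F a Q) := by
  induction a generalizing Q with
  | nil => rfl
  | cons z l ih => simp [runL, ih]

lemma LegalL_append (F : ℤ → ℕ → ℤ) (a b : List ℤ) (Q : QS) :
    LegalL F (a ++ b) Q ↔ LegalL F a Q ∧ LegalL F b (runL F a Q) := by
  induction a generalizing Q with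
  | nil => simp [LegalL, runL]
  | cons z l ih => simp [LegalL, runL, ih, and_assoc]

/-- deletion lemma: a legal stabilizing sequence can be rearranged to start with any
legal toppling. -/
lemma deleteL (F : ℤ → ℕ → ℤ) :
    ∀ (α : List ℤ) (Q : QS), LegalL F α Q → StableQ (runL F α Q) →
      ∀ w, 1 ≤ Q.act w →
      ∃ α', LegalL F α' (topple F w Q) ∧ runL F α' (topple F w Q) = runL F α Q ∧
        (w :: α').Perm α := by
  intro α
  induction α with
  | nil =>
    intro Q _ hst w hw
    have := hst w
    simp only [runL] at this
    omega
  | cons z rest ih =>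
    intro Q hleg hst w hw
    obtain ⟨hz, hrest⟩ := hleg
    by_cases hzw : z = w
    · subst hzw
      exact ⟨rest, hrest, rfl, List.Perm.refl _⟩
    · have hw' : 1 ≤ (topple F z Q).act w := topple_act_other F (Ne.symm hzw) Q hw
      obtain ⟨rest', hleg', hrun', hperm'⟩ := ih (topple F z Q) hrest hst w hw'
      refine ⟨z :: rest', ⟨topple_act_other F hzw Q hz, ?_⟩, ?_, ?_⟩
      · rw [← topple_comm F hzw hz hw] at hleg'
        exact hleg'
      · show runL F rest' (topple F z (topple F w Q)) = _
        rw [topple_comm F hzw hz hw]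
        exact hrun'
      · exact (List.Perm.swap z w rest').trans (hperm'.cons z)

/-- main abelian lemma -/
lemma mainL (F : ℤ → ℕ → ℤ) :
    ∀ (β α : List ℤ) (Q : QS), LegalL F α Q → StableQ (runL F α Q) →
      LegalL F β Q → StableQ (runL F β Q) →
      β.Perm α ∧ runL F β Q = runL F α Q := by
  intro β
  induction β with
  | nil =>
    intro α Q hlegα hstα hlegβ hstβ
    cases α with
    | nil => exact ⟨List.Perm.refl _, rfl⟩
    | cons z rest =>
      have : Q.act z = 0 := hstβ z
      exact absurd hlegα.1 (by omega)
  | cons w β' ih =>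
    intro α Q hlegα hstα hlegβ hstβ
    obtain ⟨hw, hβ'⟩ := hlegβ
    obtain ⟨α', hlegα', hrunα', hperm⟩ := deleteL F α Q hlegα hstα w hw
    have hstα' : StableQ (runL F α' (topple F w Q)) := by rw [hrunα']; exact hstα
    obtain ⟨hperm', hrun'⟩ := ih α' (topple F w Q) hlegα' hstα' hβ' hstβ
    exact ⟨(hperm'.cons w).trans hperm, by rw [show runL F (w :: β') Q = runL F β' (topple F w Q) from rfl, hrun', hrunα']⟩

/-- length bound: any legal sequence is at most as long as a legal stabilizing one. -/
lemma lenBound (F : ℤ → ℕ → ℤ) :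
    ∀ (β α : List ℤ) (Q : QS), LegalL F α Q → StableQ (runL F α Q) →
      LegalL F β Q → β.length ≤ α.length := by
  intro β
  induction β with
  | nil => intro α Q _ _ _; simp
  | cons w β' ih =>
    intro α Q hlegα hstα hlegβ
    obtain ⟨hw, hβ'⟩ := hlegβ
    obtain ⟨α', hlegα', hrunα', hperm⟩ := deleteL F α Q hlegα hstα w hw
    have hstα' : StableQ (runL F α' (topple F w Q)) := by rw [hrunα']; exact hstα
    have := ih α' (topple F w Q) hlegα' hstα' hβ'
    have hlen := hperm.length_eq
    simp at hlen ⊢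
    omega

variable {m : ℕ}

/-- number of active particles at `z` -/
def actOf (X : ARWState m) (z : ℤ) : ℕ :=
  (Finset.univ.filter fun k => X.pos k = z ∧ X.typ k = true).card

/-- number of passive particles at `z` -/
def pasOf (X : ARWState m) (z : ℤ) : ℕ :=
  (Finset.univ.filter fun k => X.pos k = z ∧ X.typ k = false).card

def qsOf (X : ARWState m) : QS := ⟨X.cnt, actOf X, pasOf X⟩

@[simp] lemma qsOf_cnt (X : ARWState m) : (qsOf X).cnt = X.cnt := rfl
@[simp] lemma qsOf_act (X : ARWState m) : (qsOf X).act = actOf X := rfl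
@[simp] lemma qsOf_pas (X : ARWState m) : (qsOf X).pas = pasOf X := rfl

lemma card_split (n : Fin m) (p : Fin m → Prop) [DecidablePred p] :
    (Finset.univ.filter p).card
      = ((Finset.univ.erase n).filter p).card + if p n then 1 else 0 := by
  have h : (Finset.univ : Finset (Fin m)) = insert n (Finset.univ.erase n) :=
    (Finset.insert_erase (Finset.mem_univ n)).symm
  conv_lhs => rw [h]
  rw [Finset.filter_insert]
  split_ifs with hp
  · rw [Finset.card_insert_of_notMem (by simp)]
  · simp

lemma erase_filter_congr (n : Fin m) (p q : Fin m → Prop) [DecidablePred p] [DecidablePred q]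
    (h : ∀ k, k ≠ n → (p k ↔ q k)) :
    ((Finset.univ.erase n).filter p).card = ((Finset.univ.erase n).filter q).card := by
  congr 1
  apply Finset.filter_congr
  intro k hk
  exact h k (Finset.ne_of_mem_erase hk)

lemma act_add_pas (X : ARWState m) (x : ℤ) :
    actOf X x + pasOf X x = (Finset.univ.filter fun k => X.pos k = x).card := by
  classical
  have h := Finset.card_filter_add_card_filter_not
    (s := Finset.univ.filter fun k => X.pos k = x) (p := fun k => X.typ k = true)
  rw [Finset.filter_filter, Finset.filter_filter] at h
  have h2 : (Finset.univ.filter fun k => X.pos k = x ∧ ¬ (X.typ k = true))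
      = (Finset.univ.filter fun k => X.pos k = x ∧ X.typ k = false) := by
    apply Finset.filter_congr
    intro k _
    simp
  rw [h2] at h
  rw [actOf, pasOf, ← h]

lemma actOf_pos {X : ARWState m} {n : Fin m} (h : X.typ n = true) :
    1 ≤ actOf X (X.pos n) :=
  Finset.card_pos.mpr ⟨n, by simp [h]⟩

lemma arwStep_passive (F : ℤ → ℕ → ℤ) {X : ARWState m} {n : Fin m} (h : X.typ n = false) :
    arwStep F n X = X := by
  simp [arwStep, h]

lemma qsOf_step (F : ℤ → ℕ → ℤ) {X : ARWState m} {n : Fin m} (h : X.typ n = true) :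
    qsOf (arwStep F n X) = topple F (X.pos n) (qsOf X) := by
  classical
  set z := X.pos n with hzdef
  by_cases hi : F z (X.cnt z) = 0
  · -- sleep instruction
    have hstep : arwStep F n X =
        { pos := X.pos
          typ := fun k =>
            if k = n then (if ∃ l, l ≠ n ∧ X.pos l = z then true else false) else X.typ k
          cnt := fun w => if w = z then X.cnt w + 1 else X.cnt w } := by
      rw [arwStep]
      simp only [h, ← hzdef, hi]
      rw [if_neg (by simp : ¬ (true = false))]
      rw [if_pos trivial]
    by_cases hex : ∃ l, l ≠ n ∧ X.pos l = z
    · -- other particles present: nothing changes but the counter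
      have hsum : ¬ (actOf X z + pasOf X z = 1) := by
        obtain ⟨l, hln, hlz⟩ := hex
        rw [act_add_pas]
        have hsub : ({l, n} : Finset (Fin m)) ⊆ Finset.univ.filter (fun k => X.pos k = z) := by
          intro k hk
          rcases Finset.mem_insert.mp hk with hk | hk
          · subst hk; simp [hlz]
          · rw [Finset.mem_singleton] at hk; subst hk; simp [hzdef]
        have h2 : 2 ≤ (Finset.univ.filter fun k => X.pos k = z).card := by
          have := Finset.card_le_card hsub
          rwa [Finset.card_pair hln] at this
        omega
      ext x
      · rw [hstep]; rfl
      · show actOf (arwStep F n X) x = _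
        rw [topple_act]
        simp only [qsOf_cnt, qsOf_act, qsOf_pas, hi, hsum, if_true, if_false]
        have : actOf (arwStep F n X) x = actOf X x := by
          rw [hstep, actOf, actOf]
          congr 1
          apply Finset.filter_congr
          intro k _
          by_cases hkn : k = n
          · subst hkn; simp [hex, h]
          · simp [hkn]
        rw [this]
        split_ifs <;> rfl
      · show pasOf (arwStep F n X) x = _
        rw [topple_pas]
        simp only [qsOf_cnt, qsOf_act, qsOf_pas, hi, hsum, if_true, if_false]
        have : pasOf (arwStep F n X) x = pasOf X x := by
          rw [hstep, pasOf, pasOf]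
          congr 1
          apply Finset.filter_congr
          intro k _
          by_cases hkn : k = n
          · subst hkn; simp [hex, h]
          · simp [hkn]
        rw [this]
        split_ifs <;> rfl
    · -- particle alone at z: it falls asleep
      have honly : ∀ k, X.pos k = z → k = n := by
        intro k hk
        by_contra hkn
        exact hex ⟨k, hkn, hk⟩
      have hfil : (Finset.univ.filter fun k => X.pos k = z) = {n} := by
        ext k
        simp only [Finset.mem_filter, Finset.mem_univ, true_and, Finset.mem_singleton]
        exact ⟨honly k, fun hk => by subst hk; rfl⟩
      have hsum : actOf X z + pasOf X z = 1 := by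
        rw [act_add_pas, hfil, Finset.card_singleton]
      ext x
      · rw [hstep]; rfl
      · show actOf (arwStep F n X) x = _
        rw [topple_act]
        simp only [qsOf_cnt, qsOf_act, qsOf_pas, hi, hsum, if_true, if_false]
        by_cases hxz : x = z
        · subst hxz
          rw [if_pos rfl]
          rw [hstep, actOf]
          rw [Finset.card_eq_zero, Finset.filter_eq_empty_iff]
          intro k _
          simp only
          intro ⟨hk1, hk2⟩
          have := honly k hk1
          subst this
          simp [hex] at hk2
        · rw [if_neg hxz]
          rw [hstep, actOf, actOf]
          congr 1
          apply Finset.filter_congr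
          intro k _
          by_cases hkn : k = n
          · have hnx : X.pos k ≠ x := by
              rw [hkn, ← hzdef]; exact fun hh => hxz hh.symm
            simp [hnx]
          · simp [hkn]
      · show pasOf (arwStep F n X) x = _
        rw [topple_pas]
        simp only [qsOf_cnt, qsOf_act, qsOf_pas, hi, hsum, if_true, if_false]
        by_cases hxz : x = z
        · subst hxz
          rw [if_pos rfl]
          rw [hstep, pasOf]
          have : (Finset.univ.filter fun k =>
              X.pos k = z ∧ (if k = n then (if ∃ l, l ≠ n ∧ X.pos l = z then true else false)
                else X.typ k) = false) = {n} := by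
            ext k
            simp only [Finset.mem_filter, Finset.mem_univ, true_and, Finset.mem_singleton]
            constructor
            · rintro ⟨h1, _⟩; exact honly k h1
            · intro hk; subst hk; exact ⟨hzdef.symm, by simp [hex]⟩
          rw [this, Finset.card_singleton]
        · rw [if_neg hxz]
          rw [hstep, pasOf, pasOf]
          congr 1
          apply Finset.filter_congr
          intro k _
          by_cases hkn : k = n
          · have hnx : X.pos k ≠ x := by
              rw [hkn, ← hzdef]; exact fun hh => hxz hh.symm
            simp [hnx]
          · simp [hkn]
  · -- jump instruction
    set i := F z (X.cnt z) with hidef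
    have hwz : z + i ≠ z := fun hc => hi (by omega)
    set w := z + i with hwdef
    have hstep : arwStep F n X =
        { pos := fun k => if k = n then w else X.pos k
          typ := fun k => if (if k = n then w else X.pos k) = w then true else X.typ k
          cnt := fun y => if y = z then X.cnt y + 1 else X.cnt y } := by
      rw [arwStep]
      simp only [h, ← hzdef, ← hidef, ← hwdef]
      rw [if_neg (by simp : ¬ (true = false)), if_neg hi]
    have hposn : X.pos n ≠ w := by rw [← hzdef]; exact Ne.symm hwz
    ext x
    · rw [hstep]; rfl
    · show actOf (arwStep F n X) x = _
      rw [topple_act]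
      simp only [qsOf_cnt, qsOf_act, qsOf_pas, ← hidef, ← hwdef]
      rw [if_neg hi]
      have hL : actOf (arwStep F n X) x = (Finset.univ.filter (fun k =>
          (if k = n then w else X.pos k) = x ∧
            (if (if k = n then w else X.pos k) = w then true else X.typ k) = true)).card := by
        rw [hstep]; rfl
      rw [hL, card_split n]
      by_cases hxw : x = w
      · subst hxw
        rw [if_pos (by simp)]
        have he : ((Finset.univ.erase n).filter (fun k =>
            (if k = n then w else X.pos k) = w ∧
              (if (if k = n then w else X.pos k) = w then true else X.typ k) = true)).card
            = ((Finset.univ.erase n).filter (fun k => X.pos k = w)).card := by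
          congr 1
          apply Finset.filter_congr
          intro k hk
          have hk' : k ≠ n := Finset.ne_of_mem_erase hk
          by_cases hp : X.pos k = w <;> simp [hp, hk']
        rw [he]
        have h2 := card_split n (fun k => X.pos k = w)
        rw [if_neg hposn] at h2
        rw [act_add_pas X w, h2, if_pos rfl]
      · rw [if_neg hxw]
        rw [if_neg (fun hc => hxw ((by simpa using hc.1 : w = x)).symm)]
        have he : ((Finset.univ.erase n).filter (fun k =>
            (if k = n then w else X.pos k) = x ∧
              (if (if k = n then w else X.pos k) = w then true else X.typ k) = true)).card
            = ((Finset.univ.erase n).filter (fun k => X.pos k = x ∧ X.typ k = true)).card := by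
          congr 1
          apply Finset.filter_congr
          intro k hk
          have hk' : k ≠ n := Finset.ne_of_mem_erase hk
          simp only [if_neg hk']
          constructor
          · rintro ⟨h1, h2⟩
            rw [h1, if_neg hxw] at h2
            exact ⟨h1, h2⟩
          · rintro ⟨h1, h2⟩
            refine ⟨h1, ?_⟩
            rw [h1, if_neg hxw]
            exact h2
        rw [he]
        by_cases hxz : x = z
        · subst hxz
          rw [if_pos rfl]
          have h2 := card_split n (fun k => X.pos k = z ∧ X.typ k = true)
          rw [if_pos ⟨hzdef.symm, h⟩] at h2
          simp only [actOf] at h2 ⊢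
          omega
        · rw [if_neg hxz]
          have h2 := card_split n (fun k => X.pos k = x ∧ X.typ k = true)
          rw [if_neg (fun hc => hxz ((hzdef.trans hc.1).symm))] at h2
          simp only [actOf] at h2 ⊢
          omega
    · show pasOf (arwStep F n X) x = _
      rw [topple_pas]
      simp only [qsOf_cnt, qsOf_act, qsOf_pas, ← hidef, ← hwdef]
      rw [if_neg hi]
      have hL : pasOf (arwStep F n X) x = (Finset.univ.filter (fun k =>
          (if k = n then w else X.pos k) = x ∧
            (if (if k = n then w else X.pos k) = w then true else X.typ k) = false)).card := by
        rw [hstep]; rfl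
      by_cases hxw : x = w
      · rw [if_pos hxw]
        subst hxw
        rw [hL, Finset.card_eq_zero, Finset.filter_eq_empty_iff]
        intro k _
        rintro ⟨h1, h2⟩
        rw [if_pos h1] at h2
        exact absurd h2 (by simp)
      · rw [if_neg hxw]
        rw [hL, card_split n]
        rw [if_neg (fun hc => hxw ((by simpa using hc.1 : w = x)).symm)]
        have he : ((Finset.univ.erase n).filter (fun k =>
            (if k = n then w else X.pos k) = x ∧
              (if (if k = n then w else X.pos k) = w then true else X.typ k) = false)).card
            = ((Finset.univ.erase n).filter (fun k => X.pos k = x ∧ X.typ k = false)).card := by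
          congr 1
          apply Finset.filter_congr
          intro k hk
          have hk' : k ≠ n := Finset.ne_of_mem_erase hk
          simp only [if_neg hk']
          constructor
          · rintro ⟨h1, h2⟩
            rw [h1, if_neg hxw] at h2
            exact ⟨h1, h2⟩
          · rintro ⟨h1, h2⟩
            refine ⟨h1, ?_⟩
            rw [h1, if_neg hxw]
            exact h2
        rw [he]
        have h2 := card_split n (fun k => X.pos k = x ∧ X.typ k = false)
        rw [if_neg (fun hc => by rw [h] at hc; exact absurd hc.2 (by simp))] at h2
        simp only [pasOf] at h2 ⊢
        omega

lemma stableQ_qsOf {X : ARWState m} (h : ∀ n, X.typ n = false) : StableQ (qsOf X) := by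
  intro z
  show actOf X z = 0
  rw [actOf, Finset.card_eq_zero, Finset.filter_eq_empty_iff]
  intro k _
  rintro ⟨-, h2⟩
  rw [h k] at h2
  exact absurd h2 (by simp)

/-- the list of sites of the nontrivial steps among the first `k` steps -/
def legalList (F : ℤ → ℕ → ℤ) (N : ℕ → Fin m) (X : ARWState m) : ℕ → List ℤ
  | 0 => []
  | k + 1 =>
    if (arwEvolve F N X k).typ (N k) = true then
      legalList F N X k ++ [(arwEvolve F N X k).pos (N k)]
    else legalList F N X k

lemma legalList_spec (F : ℤ → ℕ → ℤ) (N : ℕ → Fin m) (X : ARWState m) (k : ℕ) :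
    LegalL F (legalList F N X k) (qsOf X) ∧
      runL F (legalList F N X k) (qsOf X) = qsOf (arwEvolve F N X k) := by
  induction k with
  | zero => exact ⟨trivial, rfl⟩
  | succ k ih =>
    obtain ⟨ihl, ihr⟩ := ih
    by_cases htyp : (arwEvolve F N X k).typ (N k) = true
    · have hev : arwEvolve F N X (k+1) = arwStep F (N k) (arwEvolve F N X k) := rfl
      have hact : 1 ≤ (runL F (legalList F N X k) (qsOf X)).act
          ((arwEvolve F N X k).pos (N k)) := by
        rw [ihr]
        exact actOf_pos htyp
      constructor
      · rw [legalList, if_pos htyp, LegalL_append]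
        exact ⟨ihl, hact, trivial⟩
      · rw [legalList, if_pos htyp, runL_append, hev, qsOf_step F htyp, ihr]
        rfl
    · have htyp' : (arwEvolve F N X k).typ (N k) = false := by
        cases hb : (arwEvolve F N X k).typ (N k)
        · rfl
        · exact absurd hb htyp
      have hev : arwEvolve F N X (k+1) = arwEvolve F N X k := by
        show arwStep F (N k) (arwEvolve F N X k) = _
        exact arwStep_passive F htyp'
      rw [legalList, if_neg htyp, hev]
      exact ⟨ihl, ihr⟩

lemma legalList_len_mono (F : ℤ → ℕ → ℤ) (N : ℕ → Fin m) (X : ARWState m) :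
    Monotone (fun k => (legalList F N X k).length) := by
  apply monotone_nat_of_le_succ
  intro k
  simp only [legalList]
  split_ifs
  · simp
  · exact le_refl _

/-- a monotone bounded sequence of naturals is eventually constant -/
lemma exists_top {f : ℕ → ℕ} (hmono : Monotone f) {L : ℕ} (hbd : ∀ k, f k ≤ L) :
    ∃ K, ∀ k, K ≤ k → f k = f K := by
  have hne : (Set.range f).Nonempty := ⟨f 0, 0, rfl⟩
  have hbdd : BddAbove (Set.range f) := ⟨L, by rintro _ ⟨k, rfl⟩; exact hbd k⟩
  obtain ⟨K, hK⟩ := Nat.sSup_mem hne hbdd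
  exact ⟨K, fun k hk => le_antisymm (hK ▸ le_csSup hbdd ⟨k, rfl⟩) (hmono hk)⟩

lemma config_eq {X Y : ARWState m}
    (ha : ∀ z, actOf X z = actOf Y z) (hp : ∀ z, pasOf X z = pasOf Y z) :
    Finset.univ.val.map (fun n => (X.pos n, X.typ n)) =
      Finset.univ.val.map (fun n => (Y.pos n, Y.typ n)) := by
  classical
  apply Multiset.ext.mpr
  rintro ⟨z, b⟩
  rw [Multiset.count_map, Multiset.count_map]
  have key : ∀ W : ARWState m,
      Multiset.card (Multiset.filter (fun a => (z, b) = (W.pos a, W.typ a)) Finset.univ.val)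
        = (Finset.univ.filter (fun k => W.pos k = z ∧ W.typ k = b)).card := by
    intro W
    rw [show (Finset.univ.filter (fun k => W.pos k = z ∧ W.typ k = b)).card
        = Multiset.card ((Finset.univ.filter (fun k => W.pos k = z ∧ W.typ k = b)).val) from rfl,
      Finset.filter_val]
    congr 1
    apply Multiset.filter_congr
    intro k _
    constructor
    · intro hk
      rw [Prod.mk.injEq] at hk
      exact ⟨hk.1.symm, hk.2.symm⟩
    · rintro ⟨h1, h2⟩
      rw [Prod.mk.injEq]
      exact ⟨h1.symm, h2.symm⟩
  rw [key X, key Y]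
  cases b
  · exact hp z
  · exact ha z

end ARWProof

/-- **Commutativity (abelian property).** If, starting from a state `X` with all counters
zero, the evolution under some label sequence `N` stabilizes at `Xf`, then the evolution
under any label sequence `N' ∈ 𝒩_m` also stabilizes, at a state with the same counters
`j_z` at every site `z` (hence the same total number of opened envelopes and the same
number `R_z` of opened jump instructions at every site) and the same multiset of
(position, type) pairs as `Xf`. -/
theorem arw_commutativity {m : ℕ} (F : ℤ → ℕ → ℤ) (hF : ValidEnvelopes F)
    (X Xf : ARWState m) (hcnt : ∀ z, X.cnt z = 0)
    (N : ℕ → Fin m) (hstab : StabilizesAt F N X Xf)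
    (N' : ℕ → Fin m) (hN' : FairSeq N') :
    ∃ Xf' : ARWState m, StabilizesAt F N' X Xf' ∧
      (∀ z, Xf'.cnt z = Xf.cnt z) ∧
      (∀ z, jumpCount F z (Xf'.cnt z) = jumpCount F z (Xf.cnt z)) ∧
      (Finset.univ.val.map (fun n => (Xf'.pos n, Xf'.typ n)) =
        Finset.univ.val.map (fun n => (Xf.pos n, Xf.typ n))) := by
  classical
  open ARWProof in
  obtain ⟨⟨k₀, hk₀⟩, hpass⟩ := hstab
  obtain ⟨hlegα, hrunα⟩ := legalList_spec F N X k₀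
  have hevk₀ : arwEvolve F N X k₀ = Xf := hk₀ k₀ le_rfl
  rw [hevk₀] at hrunα
  have hstα : StableQ (runL F (legalList F N X k₀) (qsOf X)) := by
    rw [hrunα]; exact stableQ_qsOf hpass
  -- the evolution under N' has boundedly many nontrivial steps
  have hbd : ∀ k, (legalList F N' X k).length ≤ (legalList F N X k₀).length := fun k =>
    lenBound F (legalList F N' X k) (legalList F N X k₀) (qsOf X) hlegα hstα
      (legalList_spec F N' X k).1
  obtain ⟨K, hK⟩ := exists_top (legalList_len_mono F N' X) hbd
  have hstep : ∀ k, K ≤ k → (arwEvolve F N' X k).typ (N' k) = false := by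
    intro k hk
    cases hb : (arwEvolve F N' X k).typ (N' k)
    · rfl
    · exfalso
      have hlen : (legalList F N' X (k+1)).length = (legalList F N' X k).length + 1 := by
        rw [legalList, if_pos hb, List.length_append, List.length_singleton]
      have h1 := hK (k+1) (le_trans hk (Nat.le_succ k))
      have h2 := hK k hk
      omega
  have hconst : ∀ k, K ≤ k → arwEvolve F N' X k = arwEvolve F N' X K := by
    intro k hk
    induction k, hk using Nat.le_induction with
    | base => rfl
    | succ k hk ih =>
      show arwStep F (N' k) (arwEvolve F N' X k) = _
      rw [arwStep_passive F (hstep k hk), ih]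
  have hpass' : ∀ n, (arwEvolve F N' X K).typ n = false := by
    intro n
    obtain ⟨k', hk', hNk'⟩ := hN' n K
    have h1 := hstep k' hk'
    rw [hconst k' hk', hNk'] at h1
    exact h1
  have hβ := legalList_spec F N' X K
  have hstβ : StableQ (runL F (legalList F N' X K) (qsOf X)) := by
    rw [hβ.2]; exact stableQ_qsOf hpass'
  obtain ⟨-, hrun⟩ := mainL F (legalList F N' X K) (legalList F N X k₀) (qsOf X)
    hlegα hstα hβ.1 hstβ
  have hqs : qsOf (arwEvolve F N' X K) = qsOf Xf := by rw [← hβ.2, hrun, hrunα]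
  have hcnt' : ∀ z, (arwEvolve F N' X K).cnt z = Xf.cnt z := fun z =>
    congrFun (congrArg QS.cnt hqs) z
  refine ⟨arwEvolve F N' X K, ⟨⟨K, hconst⟩, hpass'⟩, hcnt', fun z => by rw [hcnt' z], ?_⟩
  exact config_eq (fun z => congrFun (congrArg QS.act hqs) z)
    (fun z => congrFun (congrArg QS.pas hqs) z)
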